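/- (Corollary 1 and simplified systematic encoding) Let ε ∈ [0,1], n a natural number, N = 2^n, and let A ⊆ Fin N satisfy Z_ε(j) < Z_ε(i) for every j ∈ A and i ∉ A. Then the submatrix G_{ĀA} of G = F^{⊗n} over GF(2), with rows indexed by the complement of A and columns indexed by A, is the zero matrix; consequently, for every vector u : Fin N → ZMod 2, the restriction of x = uG to the coordinates in A depends only on the restriction of u to A, namely x_j = ∑_{i ∈ A} u_i G_{i,j} for every j ∈ A. -/

import Mathlib

/-- The basic polar kernel `F = [[1,0],[1,1]]` over `GF(2)`. -/
def polarF : Matrix (Fin 2) (Fin 2) (ZMod 2) := !![1, 0; 1, 1]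

/-- The `n`-fold Kronecker power `G = F^{⊗n}` of the polar kernel over `GF(2)`,
indexed by `Fin (2^n)` (0-indexed), where the first Kronecker factor corresponds
to the most significant bit of the index. -/
def polarG : (n : ℕ) → Matrix (Fin (2 ^ n)) (Fin (2 ^ n)) (ZMod 2)
  | 0 => 1
  | n + 1 =>
    Matrix.reindex
      (finProdFinEquiv.trans (finCongr (by ring)))
      (finProdFinEquiv.trans (finCongr (by ring)))
      (Matrix.kroneckerMap (· * ·) polarF (polarG n))
/-- The Bhattacharyya parameter of the BEC bit channel described by the bit string
`b : Fin n → Bool`: starting from the erasure probability `ε`, the bits are processed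
from index `n-1` (most significant) down to index `0`, replacing the current value `z`
by `z^2` if the bit is `true` and by `2z - z^2` if the bit is `false`. -/
def Zrec (ε : ℝ) : (n : ℕ) → (Fin n → Bool) → ℝ
  | 0, _ => ε
  | n + 1, b =>
    let z := Zrec ε n fun m => b m.succ
    if b 0 then z ^ 2 else 2 * z - z ^ 2

/-- The Bhattacharyya parameter of bit channel `i`, obtained from the `n`-bit binary
expansion of `i`. -/
def Zbit (ε : ℝ) (n : ℕ) (i : Fin (2 ^ n)) : ℝ :=
  Zrec ε n fun m => Nat.testBit (i : ℕ) (m : ℕ)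



lemma div_lt_two (n : ℕ) (i : Fin (2^(n+1))) : (i:ℕ) / 2^n < 2 := by
  apply Nat.div_lt_of_lt_mul
  have := i.2
  have h : (2:ℕ)^(n+1) = 2^n * 2 := by ring
  omega
lemma polarG_succ_apply (n : ℕ) (i j : Fin (2^(n+1))) :
    polarG (n+1) i j =
      polarF ⟨(i:ℕ)/2^n, div_lt_two n i⟩
             ⟨(j:ℕ)/2^n, div_lt_two n j⟩ *
      polarG n ⟨(i:ℕ)%2^n, Nat.mod_lt _ (Nat.two_pow_pos n)⟩
               ⟨(j:ℕ)%2^n, Nat.mod_lt _ (Nat.two_pow_pos n)⟩ := by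
  show (Matrix.reindex _ _ _) i j = _
  rw [Matrix.reindex_apply, Matrix.submatrix_apply, Matrix.kroneckerMap_apply]
  congr 1 <;> congr 1 <;>
    simp [Equiv.symm_trans_apply, finProdFinEquiv, Fin.divNat, Fin.modNat, finCongr]

lemma Zrec_mem (ε : ℝ) (hε : ε ∈ Set.Icc (0:ℝ) 1) :
    ∀ n (b : Fin n → Bool), Zrec ε n b ∈ Set.Icc (0:ℝ) 1 := by
  intro n
  induction n with
  | zero => intro b; exact hε
  | succ n ih =>
    intro b
    have h := ih (fun m => b m.succ)
    obtain ⟨h0, h1⟩ := h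
    simp only [Zrec]
    split <;> constructor <;> nlinarith

lemma Zrec_mono (ε : ℝ) (hε : ε ∈ Set.Icc (0:ℝ) 1) :
    ∀ n (b c : Fin n → Bool), (∀ m, c m = true → b m = true) →
      Zrec ε n b ≤ Zrec ε n c := by
  intro n
  induction n with
  | zero => intro b c _; exact le_refl _
  | succ n ih =>
    intro b c h
    have hbc := ih (fun m => b m.succ) (fun m => c m.succ) (fun m => h m.succ)
    obtain ⟨hb0, hb1⟩ := Zrec_mem ε hε n (fun m => b m.succ)
    obtain ⟨hc0, hc1⟩ := Zrec_mem ε hε n (fun m => c m.succ)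
    simp only [Zrec]
    rcases hb : b 0 <;> rcases hc : c 0 <;>
      simp only [hb, hc, if_true, if_false, Bool.false_eq_true] <;>
      first
        | nlinarith [hbc]
        | (exact absurd (h 0 hc) (by rw [hb]; simp))

lemma polarG_ne_zero (n : ℕ) (i j : Fin (2^n)) (h : polarG n i j ≠ 0) :
    ∀ k, Nat.testBit (j:ℕ) k = true → Nat.testBit (i:ℕ) k = true := by
  induction n with
  | zero =>
    intro k hk
    have : (j:ℕ) = 0 := by omega
    simp [this] at hk
  | succ n ih =>
    rw [polarG_succ_apply] at h
    have h1 : polarF ⟨(i:ℕ)/2^n, div_lt_two n i⟩ ⟨(j:ℕ)/2^n, div_lt_two n j⟩ ≠ 0 :=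
      fun hz => h (by rw [hz, zero_mul])
    have h2 : polarG n ⟨(i:ℕ)%2^n, Nat.mod_lt _ (Nat.two_pow_pos n)⟩
               ⟨(j:ℕ)%2^n, Nat.mod_lt _ (Nat.two_pow_pos n)⟩ ≠ 0 :=
      fun hz => h (by rw [hz, mul_zero])
    have ih' := ih _ _ h2
    intro k hk
    rcases lt_trichotomy k n with hkn | heq | hkn
    · have hjk : Nat.testBit ((j:ℕ) % 2^n) k = true := by
        rw [Nat.testBit_mod_two_pow]; simp [hkn, hk]
      have := ih' k hjk
      rw [Nat.testBit_mod_two_pow] at this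
      simpa [hkn] using this
    · -- k = n : top bit, use polarF
      rw [heq] at hk ⊢
      have hij : ∀ (x : Fin (2^(n+1))), Nat.testBit (x:ℕ) n = decide ((x:ℕ)/2^n = 1) := by
        intro x
        rw [Nat.testBit, Nat.shiftRight_eq_div_pow]
        have := div_lt_two n x
        interval_cases h : (x:ℕ) / 2^n <;> simp
      rw [hij] at hk ⊢
      have hj1 : (j:ℕ)/2^n = 1 := by simpa using hk
      by_contra hi
      have hi0 : (i:ℕ)/2^n = 0 := by
        have h2n := div_lt_two n i
        rw [decide_eq_true_eq] at hi
        exact Nat.lt_one_iff.mp (lt_of_le_of_ne (Nat.lt_succ_iff.mp h2n) hi)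
      apply h1
      have : polarF ⟨(i:ℕ)/2^n, div_lt_two n i⟩ ⟨(j:ℕ)/2^n, div_lt_two n j⟩
           = polarF 0 1 := by
        congr 1 <;> exact Fin.ext (by simp [hi0, hj1])
      rw [this]; simp [polarF]
    · exfalso
      have hjlt : (j:ℕ) < 2^k := lt_of_lt_of_le j.2 (Nat.pow_le_pow_right (by norm_num) hkn)
      rw [Nat.testBit_lt_two_pow hjlt] at hk
      exact Bool.false_ne_true hk

/-- Corollary 1 and simplified systematic encoding: if the information
set `A` is chosen by the polar coding principle, then the submatrix `G_{ĀA}` (rows in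
the complement of `A`, columns in `A`) is zero; consequently, for every
`u : Fin N → ZMod 2`, the restriction of `x = uG` to the coordinates in `A` depends
only on `u` restricted to `A`: `x_j = ∑_{i ∈ A} u_i G_{i,j}` for every `j ∈ A`. -/
theorem polarG_systematic_simplification (n : ℕ) (ε : ℝ) (hε : ε ∈ Set.Icc (0 : ℝ) 1)
    (A : Finset (Fin (2 ^ n)))
    (hA : ∀ j ∈ A, ∀ i ∉ A, Zbit ε n j < Zbit ε n i) :
    (∀ i ∉ A, ∀ j ∈ A, polarG n i j = 0) ∧
    (∀ u : Fin (2 ^ n) → ZMod 2, ∀ j ∈ A,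
      (∑ i : Fin (2 ^ n), u i * polarG n i j) = ∑ i ∈ A, u i * polarG n i j) := by
  have hzero : ∀ i ∉ A, ∀ j ∈ A, polarG n i j = 0 := by
    intro i hi j hj
    by_contra hG
    have hsub := polarG_ne_zero n i j hG
    have hle : Zbit ε n i ≤ Zbit ε n j :=
      Zrec_mono ε hε n _ _ (fun m hm => hsub m hm)
    exact absurd (hA j hj i hi) (not_lt.mpr hle)
  refine ⟨hzero, fun u j hj => ?_⟩
  symm
  apply Finset.sum_subset (Finset.subset_univ A)
  intro i _ hi
  rw [hzero i hi j hj, mul_zero]
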